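/- Let V be a real Hilbert space, let T > 0, and let F : ℝ × V × ℝ → ℝ be continuously Fréchet differentiable. Let v : [0,T] → V be differentiable and let σ : [0,T] → ℝ be nondecreasing. Assume: (1) for every t ∈ [0,T], the partial Fréchet differential of F with respect to its second argument vanishes at (t, v(t), σ(t)), i.e. D_vF(t,v(t),σ(t)) = 0; (2) for every t ∈ [0,T], ∂_σF(t,v(t),σ(t)) ≥ 0; (3) for all 0 ≤ s < t ≤ T, F(t,v(t),σ(t)) ≤ F(s,v(s),σ(s)) + ∫_s^t ∂_τF(τ,v(τ),σ(τ)) dτ. Then at every t ∈ (0,T) at which σ is differentiable (hence at almost every t), ∂_σF(t,v(t),σ(t))·σ′(t) = 0. -/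

import Mathlib

open Set MeasureTheory intervalIntegral Filter Topology

/-- Proposition 3.2 (abstract form): along an irreversible quasistatic evolution
(local unilateral stability + energy inequality), Griffith's criterion
`∂_σF(t,v(t),σ(t))·σ̇(t) = 0` holds at every differentiability point of `σ`. -/
theorem griffith_criterion
    {V : Type*} [NormedAddCommGroup V] [InnerProductSpace ℝ V] [CompleteSpace V]
    (T : ℝ) (hT : 0 < T)
    (F : ℝ → V → ℝ → ℝ)
    (hF : ContDiff ℝ 1 (fun p : ℝ × V × ℝ => F p.1 p.2.1 p.2.2))
    (v : ℝ → V) (σ : ℝ → ℝ)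
    (hv : ∀ t ∈ Icc (0:ℝ) T, DifferentiableAt ℝ v t)
    (hσmono : MonotoneOn σ (Icc 0 T))
    (hstab1 : ∀ t ∈ Icc (0:ℝ) T, fderiv ℝ (fun w => F t w (σ t)) (v t) = 0)
    (hstab2 : ∀ t ∈ Icc (0:ℝ) T, 0 ≤ deriv (fun s => F t (v t) s) (σ t))
    (henergy : ∀ s t : ℝ, 0 ≤ s → s < t → t ≤ T →
      F t (v t) (σ t) ≤ F s (v s) (σ s)
        + ∫ τ in s..t, deriv (fun r => F r (v τ) (σ τ)) τ) :
    ∀ t ∈ Ioo (0:ℝ) T, ∀ d : ℝ, HasDerivAt σ d t →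
      deriv (fun s => F t (v t) s) (σ t) * d = 0 := by
  intro t₀ ht₀ d hd
  have ht₀Icc : t₀ ∈ Icc (0:ℝ) T := Ioo_subset_Icc_self ht₀
  set G : ℝ × V × ℝ → ℝ := fun p => F p.1 p.2.1 p.2.2 with hGdef
  have hGdiff : Differentiable ℝ G := hF.differentiable one_ne_zero
  set L : (ℝ × V × ℝ) →L[ℝ] ℝ := fderiv ℝ G (t₀, v t₀, σ t₀) with hLdef
  -- partial derivative in t
  have hpartial_t : ∀ (a : ℝ) (w : V) (s : ℝ),
      HasDerivAt (fun r => F r w s) (fderiv ℝ G (a, w, s) (1, 0, 0)) a := by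
    intro a w s
    have h1 : HasDerivAt (fun r : ℝ => ((r, w, s) : ℝ × V × ℝ)) ((1:ℝ), (0:V), (0:ℝ)) a :=
      (hasDerivAt_id a).prodMk (hasDerivAt_const a ((w, s) : V × ℝ))
    exact ((hGdiff (a, w, s)).hasFDerivAt.comp_hasDerivAt a h1)
  -- partial derivative in σ
  have hpartial_s : ∀ (a : ℝ) (w : V) (s : ℝ),
      HasDerivAt (fun x => F a w x) (fderiv ℝ G (a, w, s) (0, 0, 1)) s := by
    intro a w s
    have h1 : HasDerivAt (fun x : ℝ => ((a, w, x) : ℝ × V × ℝ)) ((0:ℝ), (0:V), (1:ℝ)) s :=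
      (hasDerivAt_const s a).prodMk ((hasDerivAt_const s w).prodMk (hasDerivAt_id s))
    exact ((hGdiff (a, w, s)).hasFDerivAt.comp_hasDerivAt s h1)
  -- stability 1 gives L (0, w, 0) = 0
  have hLv : ∀ w : V, L ((0:ℝ), w, (0:ℝ)) = 0 := by
    intro w
    have hJ : HasFDerivAt (fun x : V => ((t₀, x, σ t₀) : ℝ × V × ℝ))
        (((0 : V →L[ℝ] ℝ)).prod ((ContinuousLinearMap.id ℝ V).prod (0 : V →L[ℝ] ℝ))) (v t₀) :=
      (hasFDerivAt_const t₀ (v t₀)).prodMk ((hasFDerivAt_id (v t₀)).prodMk (hasFDerivAt_const (σ t₀) (v t₀)))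
    have h2 : HasFDerivAt (fun x : V => F t₀ x (σ t₀))
        (L.comp (((0 : V →L[ℝ] ℝ)).prod ((ContinuousLinearMap.id ℝ V).prod (0 : V →L[ℝ] ℝ)))) (v t₀) :=
      by have := (hGdiff (t₀, v t₀, σ t₀)).hasFDerivAt.comp (v t₀) hJ; exact this
    have h3 := h2.fderiv
    rw [hstab1 t₀ ht₀Icc] at h3
    have := congrArg (fun (M : V →L[ℝ] ℝ) => M w) h3
    simpa using this.symm
  set c : ℝ := deriv (fun s => F t₀ (v t₀) s) (σ t₀) with hcdef
  have hcL : c = L ((0:ℝ), (0:V), (1:ℝ)) := (hpartial_s t₀ (v t₀) (σ t₀)).deriv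
  have hc : 0 ≤ c := hstab2 t₀ ht₀Icc
  -- g
  set g : ℝ → ℝ := fun τ => fderiv ℝ G (τ, v τ, σ τ) (1, 0, 0) with hgdef
  have heq : ∀ τ : ℝ, deriv (fun r => F r (v τ) (σ τ)) τ = g τ := fun τ =>
    (hpartial_t τ (v τ) (σ τ)).deriv
  -- derivative of the total energy
  have hvd : HasDerivAt v (deriv v t₀) t₀ := (hv t₀ ht₀Icc).hasDerivAt
  have hγ : HasDerivAt (fun t : ℝ => ((t, v t, σ t) : ℝ × V × ℝ))
      ((1:ℝ), deriv v t₀, d) t₀ := (hasDerivAt_id t₀).prodMk (hvd.prodMk hd)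
  have hE : HasDerivAt (fun t => F t (v t) (σ t)) (L ((1:ℝ), deriv v t₀, d)) t₀ :=
    by have := (hGdiff (t₀, v t₀, σ t₀)).hasFDerivAt.comp_hasDerivAt t₀ hγ; exact this
  have hdecomp : L ((1:ℝ), deriv v t₀, d) = g t₀ + d * c := by
    have hsplit : ((1:ℝ), deriv v t₀, d)
        = ((1:ℝ), (0:V), (0:ℝ)) + ((0:ℝ), deriv v t₀, (0:ℝ)) + (d • ((0:ℝ), (0:V), (1:ℝ))) := by
      simp [Prod.ext_iff]
    rw [hsplit, map_add, map_add, L.map_smul, hLv]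
    simp [hgdef, hcL, hLdef, smul_eq_mul]
  rw [hdecomp] at hE
  -- d ≥ 0
  have hslope := hasDerivAt_iff_tendsto_slope.1 hd
  have hne : (𝓝[>] t₀).NeBot := nhdsGT_neBot t₀
  have hIocmem : Ioc t₀ T ∈ 𝓝[>] t₀ := by
    rw [← Ioi_inter_Iic]
    exact inter_mem_nhdsWithin _ (Iic_mem_nhds ht₀.2)
  have hd0 : 0 ≤ d := by
    refine ge_of_tendsto (hslope.mono_left (nhdsWithin_mono t₀ fun x (hx : x ∈ Ioi t₀) => (hx.ne' : x ≠ t₀))) ?_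
    filter_upwards [hIocmem] with u hu
    have h1 : σ t₀ ≤ σ u := hσmono ht₀Icc ⟨(ht₀.1.trans hu.1).le, hu.2⟩ hu.1.le
    have h2 : 0 < u - t₀ := sub_pos.2 hu.1
    rw [slope_def_field]
    exact div_nonneg (sub_nonneg.2 h1) h2.le
  -- FTC for h(u) = ∫_{t₀}^u g
  have hcontv : ContinuousOn v (Icc 0 T) := fun x hx => (hv x hx).continuousAt.continuousWithinAt
  have hmeasγ : AEStronglyMeasurable (fun τ => ((τ, v τ, σ τ) : ℝ × V × ℝ))
      (volume.restrict (Icc 0 T)) := by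
    refine AEStronglyMeasurable.prodMk ?_ (AEStronglyMeasurable.prodMk ?_ ?_)
    · exact aestronglyMeasurable_id
    · exact hcontv.aestronglyMeasurable measurableSet_Icc
    · exact (aemeasurable_restrict_of_monotoneOn measurableSet_Icc hσmono).aestronglyMeasurable
  have hfdcont : Continuous (fun p : ℝ × V × ℝ => fderiv ℝ G p) :=
    hF.continuous_fderiv one_ne_zero
  have hgmeas : AEStronglyMeasurable g (volume.restrict (Icc 0 T)) := by
    have : Continuous (fun p : ℝ × V × ℝ => fderiv ℝ G p ((1:ℝ), (0:V), (0:ℝ))) :=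
      (ContinuousLinearMap.apply ℝ ℝ (((1:ℝ), (0:V), (0:ℝ)) : ℝ × V × ℝ)).continuous.comp hfdcont
    exact this.comp_aestronglyMeasurable hmeasγ
  have hgcont : ContinuousAt g t₀ := by
    have hγc : ContinuousAt (fun τ => ((τ, v τ, σ τ) : ℝ × V × ℝ)) t₀ :=
      continuousAt_id.prodMk ((hv t₀ ht₀Icc).continuousAt.prodMk hd.continuousAt)
    exact ((ContinuousLinearMap.apply ℝ ℝ (((1:ℝ), (0:V), (0:ℝ)) : ℝ × V × ℝ)).continuous.comp
      hfdcont).continuousAt.comp hγc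
  have hFTC : HasDerivAt (fun u => ∫ τ in t₀..u, g τ) (g t₀) t₀ :=
    intervalIntegral.integral_hasDerivAt_right IntervalIntegrable.refl
      ⟨Icc 0 T, Icc_mem_nhds ht₀.1 ht₀.2, hgmeas⟩ hgcont
  -- ψ
  set ψ : ℝ → ℝ := fun u => F t₀ (v t₀) (σ t₀) + (∫ τ in t₀..u, g τ) - F u (v u) (σ u) with hψdef
  have hψd : HasDerivAt ψ (g t₀ - (g t₀ + d * c)) t₀ := by
    have h := ((hasDerivAt_const t₀ (F t₀ (v t₀) (σ t₀))).add hFTC).sub hE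
    simpa [hψdef, Pi.add_def, Pi.sub_def] using h
  have hψ0 : ψ t₀ = 0 := by simp [hψdef, intervalIntegral.integral_same]
  have hψnonneg : ∀ u ∈ Ioc t₀ T, 0 ≤ ψ u := by
    intro u hu
    have := henergy t₀ u ht₀.1.le hu.1 hu.2
    have hint : (∫ τ in t₀..u, deriv (fun r => F r (v τ) (σ τ)) τ) = ∫ τ in t₀..u, g τ := by
      simp only [heq]
    rw [hint] at this
    simp only [hψdef]
    linarith
  -- ψ' ≥ 0 via right slopes
  have hψ' : 0 ≤ g t₀ - (g t₀ + d * c) := by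
    have hslopeψ := hasDerivAt_iff_tendsto_slope.1 hψd
    refine ge_of_tendsto (hslopeψ.mono_left (nhdsWithin_mono t₀ fun x (hx : x ∈ Ioi t₀) => (hx.ne' : x ≠ t₀))) ?_
    filter_upwards [hIocmem] with u hu
    have h2 : 0 < u - t₀ := sub_pos.2 hu.1
    rw [slope_def_field, hψ0, sub_zero]
    exact div_nonneg (hψnonneg u hu) h2.le
  have hdc : d * c ≤ 0 := by linarith
  have : c * d = 0 := le_antisymm (by linarith [hdc, mul_comm d c]) (mul_nonneg hc hd0)
  simpa [hcdef, mul_comm] using this
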